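/- arXiv:1310.8381 — 2 statements merged into one kernel-verified Lean document; each statement's English description precedes it below -/
import Mathlib

section
/- Define a partial order on labels by ℓ(v) ≺ ℓ(u) iff the rank sequence of ℓ(v) followed by +∞ is lexicographically greater than that of ℓ(u) followed by +∞. If ℓ(u) ≺ ℓ(v) (strictly), then there is no directed path from v to u in the DAG. -/
open Classical Finset
open scoped Classical

noncomputable section

variable {V : Type*}

/-- Reachability: `reach adj u v` iff there is a directed path from `u` to `v`
(including the trivial path, so `reach adj v v` always holds). -/
def reach (adj : V → V → Prop) : V → V → Prop := Relation.ReflTransGen adj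

/-- The graph has no (nontrivial) directed cycle. -/
def IsAcyclic (adj : V → V → Prop) : Prop := ∀ x, ¬ Relation.TransGen adj x x

/-- `P(v)`: the set of predecessors of `v` (vertices with a path to `v`, including `v`). -/
def predSet [Fintype V] (adj : V → V → Prop) (v : V) : Finset V :=
  Finset.univ.filter fun u => reach adj u v

/-- `S(v)`: the set of successors of `v` (vertices reachable from `v`, including `v`). -/
def succSet [Fintype V] (adj : V → V → Prop) (v : V) : Finset V :=
  Finset.univ.filter fun u => reach adj v u

/-- The element of `A` of minimum rank (an arbitrary vertex if `A = ∅`). -/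
def argminR [Nonempty V] (r : V → ℕ∞) (A : Finset V) : V :=
  if h : A.Nonempty then (Finset.exists_min_image A r h).choose else Classical.arbitrary V

/-- The sets `A_{i+1}(v)` (0-indexed: `Aset adj L r v i` is the paper's `A_{i+1}(v)`):
`A_1(v) = P(v) ∩ L`, and `A_{i+1}(v) = (S(ℓ_i(v)) ∩ P(v) ∩ L) \ {ℓ_i(v)}` where
`ℓ_i(v)` is the minimum-rank element of `A_i(v)`. -/
def Aset [Fintype V] [Nonempty V] (adj : V → V → Prop) (L : Finset V) (r : V → ℕ∞)
    (v : V) : ℕ → Finset V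
  | 0 => predSet adj v ∩ L
  | i + 1 =>
    if (Aset adj L r v i).Nonempty then
      (succSet adj (argminR r (Aset adj L r v i)) ∩ predSet adj v ∩ L).erase
        (argminR r (Aset adj L r v i))
    else ∅

/-- `ℓ_{i+1}(v)` (0-indexed). -/
def labVertex [Fintype V] [Nonempty V] (adj : V → V → Prop) (L : Finset V) (r : V → ℕ∞)
    (v : V) (i : ℕ) : V := argminR r (Aset adj L r v i)

/-- `k(v)`: the number of indices `i` with `A_{i+1}(v) ≠ ∅` (in a DAG the sets shrink,
so this is the largest `i` with `A_i(v) ≠ ∅`, in the paper's 1-indexed convention). -/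
def kOf [Fintype V] [Nonempty V] (adj : V → V → Prop) (L : Finset V) (r : V → ℕ∞) (v : V) : ℕ :=
  ((Finset.range (Fintype.card V + 1)).filter fun i => (Aset adj L r v i).Nonempty).card

/-- The label `ℓ(v) = (ℓ_1(v), …, ℓ_{k(v)}(v))`. -/
def labelSeq [Fintype V] [Nonempty V] (adj : V → V → Prop) (L : Finset V) (r : V → ℕ∞)
    (v : V) : List V :=
  (List.range (kOf adj L r v)).map (labVertex adj L r v)

/-- The rank sequence `r(ℓ(v))` with `+∞` appended. -/
def rankSeq [Fintype V] [Nonempty V] (adj : V → V → Prop) (L : Finset V) (r : V → ℕ∞)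
    (v : V) : List ℕ∞ :=
  ((labelSeq adj L r v).map r) ++ [⊤]

/-- `ℓ(u) ≺ ℓ(v)`: decreasing lexicographic order on the rank sequences with `+∞` appended. -/
def labLt [Fintype V] [Nonempty V] (adj : V → V → Prop) (L : Finset V) (r : V → ℕ∞)
    (u v : V) : Prop :=
  List.Lex (· < ·) (rankSeq adj L r v) (rankSeq adj L r u)


set_option linter.unusedSectionVars false

section AuxLemmas

variable [Fintype V] [Nonempty V] {adj : V → V → Prop} {L : Finset V} {r : V → ℕ∞}

lemma mem_predSet {w v : V} : w ∈ predSet adj v ↔ reach adj w v := by simp [predSet]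
lemma mem_succSet {w v : V} : w ∈ succSet adj v ↔ reach adj v w := by simp [succSet]

lemma argminR_mem {A : Finset V} (h : A.Nonempty) : argminR r A ∈ A := by
  rw [argminR, dif_pos h]
  exact (Finset.exists_min_image A r h).choose_spec.1

lemma argminR_min {A : Finset V} (h : A.Nonempty) {b : V} (hb : b ∈ A) :
    r (argminR r A) ≤ r b := by
  rw [argminR, dif_pos h]
  exact (Finset.exists_min_image A r h).choose_spec.2 b hb

lemma Aset_subset_L (v : V) : ∀ i, Aset adj L r v i ⊆ L
  | 0 => Finset.inter_subset_right
  | i+1 => by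
    rw [Aset]
    split
    · intro w hw
      exact (Finset.mem_inter.1 (Finset.mem_of_mem_erase hw)).2
    · simp

lemma Aset_nonempty_of_succ {v : V} {i : ℕ} (h : (Aset adj L r v (i+1)).Nonempty) :
    (Aset adj L r v i).Nonempty := by
  by_contra h0
  rw [Aset, if_neg h0] at h
  simp at h

lemma Aset_succ_subset (hacyc : IsAcyclic adj) (v : V) :
    ∀ i, Aset adj L r v (i+1) ⊆ Aset adj L r v i := by
  intro i
  match i with
  | 0 =>
    intro w hw
    rw [Aset] at hw
    rw [Aset]
    by_cases h0 : (Aset adj L r v 0).Nonempty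
    · rw [if_pos h0] at hw
      have h1 := Finset.mem_of_mem_erase hw
      exact Finset.mem_inter.2 ⟨(Finset.mem_inter.1 (Finset.mem_inter.1 h1).1).2,
        (Finset.mem_inter.1 h1).2⟩
    · rw [if_neg h0] at hw
      simp at hw
  | i+1 =>
    intro w hw
    by_cases h1 : (Aset adj L r v (i+1)).Nonempty
    · have h0 : (Aset adj L r v i).Nonempty := Aset_nonempty_of_succ h1
      set a0 := argminR r (Aset adj L r v i) with ha0
      set a1 := argminR r (Aset adj L r v (i+1)) with ha1
      have hℓ1 : a1 ∈ Aset adj L r v (i+1) := argminR_mem h1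
      have hAi1 : Aset adj L r v (i+1) = (succSet adj a0 ∩ predSet adj v ∩ L).erase a0 := by
        rw [Aset, if_pos h0]
      have hAi2 : Aset adj L r v (i+1+1) = (succSet adj a1 ∩ predSet adj v ∩ L).erase a1 := by
        rw [Aset, if_pos h1]
      rw [hAi2] at hw
      rw [hAi1] at hℓ1
      rw [hAi1]
      obtain ⟨hne1, hmem1⟩ := Finset.mem_erase.1 hℓ1
      obtain ⟨hwne, hwmem⟩ := Finset.mem_erase.1 hw
      rw [Finset.mem_inter, Finset.mem_inter] at hmem1 hwmem
      have hr01 : reach adj a0 a1 := mem_succSet.1 hmem1.1.1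
      have hr1w : reach adj a1 w := mem_succSet.1 hwmem.1.1
      refine Finset.mem_erase.2 ⟨?_, Finset.mem_inter.2 ⟨Finset.mem_inter.2
        ⟨mem_succSet.2 (hr01.trans hr1w), hwmem.1.2⟩, hwmem.2⟩⟩
      intro hweq
      rw [hweq] at hr1w
      rcases Relation.reflTransGen_iff_eq_or_transGen.1 hr01 with heq | htg
      · exact hne1 heq
      · exact hacyc _ (Relation.TransGen.trans_right hr1w htg)
    · rw [Aset, if_neg h1] at hw
      simp at hw


lemma Aset_card_lt (hacyc : IsAcyclic adj) {v : V} {i : ℕ} (h : (Aset adj L r v i).Nonempty) :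
    (Aset adj L r v (i+1)).card < (Aset adj L r v i).card := by
  apply Finset.card_lt_card
  refine ⟨Aset_succ_subset hacyc v i, fun hsub => ?_⟩
  have hmem := hsub (argminR_mem (r := r) h)
  rw [Aset, if_pos h] at hmem
  exact (Finset.mem_erase.1 hmem).1 rfl

lemma Aset_lt_card (hacyc : IsAcyclic adj) {v : V} {i : ℕ}
    (h : (Aset adj L r v i).Nonempty) : i < Fintype.card V := by
  have key : ∀ n, (Aset adj L r v n).Nonempty →
      n + (Aset adj L r v n).card ≤ (Aset adj L r v 0).card := by
    intro n
    induction n with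
    | zero => simp
    | succ n ih =>
      intro hn
      have h0 := Aset_nonempty_of_succ hn
      have h1 := Aset_card_lt hacyc h0
      have h2 := ih h0
      omega
  have h0card : (Aset adj L r v 0).card ≤ Fintype.card V := Finset.card_le_univ _
  have hc : 1 ≤ (Aset adj L r v i).card := Finset.card_pos.2 h
  have := key i h
  omega

lemma Aset_empty_mono {v : V} {i j : ℕ} (hij : i ≤ j)
    (h : ¬ (Aset adj L r v i).Nonempty) : ¬ (Aset adj L r v j).Nonempty := by
  obtain ⟨d, rfl⟩ := Nat.exists_eq_add_of_le hij
  induction d with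
  | zero => exact h
  | succ d ih =>
    intro hne
    exact ih (Nat.le_add_right _ _) (Aset_nonempty_of_succ hne)

lemma Aset_nonempty_iff (hacyc : IsAcyclic adj) (v : V) (i : ℕ) :
    (Aset adj L r v i).Nonempty ↔ i < kOf adj L r v := by
  have hex : ∃ n, ¬ (Aset adj L r v n).Nonempty :=
    ⟨Fintype.card V, fun h => lt_irrefl _ (Aset_lt_card hacyc h)⟩
  have hk'le : Nat.find hex ≤ Fintype.card V :=
    Nat.find_le (fun h => lt_irrefl _ (Aset_lt_card hacyc h))
  have hchar : ∀ j, (Aset adj L r v j).Nonempty ↔ j < Nat.find hex := by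
    intro j
    constructor
    · intro h
      by_contra hlt
      push_neg at hlt
      exact Aset_empty_mono hlt (by convert Nat.find_spec hex; exact Finset.not_nonempty_iff_eq_empty.symm) h
    · intro h
      exact not_not.1 (Nat.find_min hex h)
  have hkof : kOf adj L r v = Nat.find hex := by
    rw [kOf]
    have hset : ((Finset.range (Fintype.card V + 1)).filter
        fun i => (Aset adj L r v i).Nonempty) = Finset.range (Nat.find hex) := by
      ext j
      simp only [Finset.mem_filter, Finset.mem_range]
      constructor
      · rintro ⟨-, hne⟩
        exact (hchar j).1 hne
      · intro hj
        exact ⟨by omega, (hchar j).2 hj⟩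
    rw [hset, Finset.card_range]
  rw [hkof]
  exact hchar i




lemma Aset_subset_of_reach {u v : V} (hvu : reach adj v u) :
    ∀ i, (∀ j, j < i → labVertex adj L r v j = labVertex adj L r u j) →
      Aset adj L r v i ⊆ Aset adj L r u i := by
  have hP : predSet adj v ⊆ predSet adj u := fun w hw =>
    mem_predSet.2 ((mem_predSet.1 hw).trans hvu)
  intro i
  induction i with
  | zero =>
    intro _
    rw [Aset, Aset]
    exact Finset.inter_subset_inter hP (Finset.Subset.refl L)
  | succ i ih =>
    intro hpre
    by_cases h0 : (Aset adj L r v i).Nonempty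
    · have hsub := ih fun j hj => hpre j (Nat.lt_succ_of_lt hj)
      have h0u : (Aset adj L r u i).Nonempty := by
        obtain ⟨x, hx⟩ := h0; exact ⟨x, hsub hx⟩
      have harg : argminR r (Aset adj L r v i) = argminR r (Aset adj L r u i) :=
        hpre i (Nat.lt_succ_self i)
      rw [Aset, if_pos h0, Aset, if_pos h0u, ← harg]
      exact Finset.erase_subset_erase _ (Finset.inter_subset_inter
        (Finset.inter_subset_inter (Finset.Subset.refl _) hP) (Finset.Subset.refl _))
    · rw [Aset, if_neg h0]
      simp

lemma map_range_split {α : Type*} (g : ℕ → α) : ∀ {k i : ℕ}, i < k →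
    ∃ t, (List.range k).map g = (List.range i).map g ++ g i :: t := by
  intro k
  induction k with
  | zero => intro i h; omega
  | succ k ih =>
    intro i h
    rcases Nat.lt_or_ge i k with h' | h'
    · obtain ⟨t, ht⟩ := ih h'
      refine ⟨t ++ [g k], ?_⟩
      rw [List.range_succ, List.map_append, ht]
      simp
    · have hik : i = k := by omega
      subst hik
      exact ⟨[], by rw [List.range_succ, List.map_append]; simp⟩

lemma rankSeq_eq (w : V) : rankSeq adj L r w =
    (List.range (kOf adj L r w)).map (fun j => r (labVertex adj L r w j)) ++ [⊤] := by
  rw [rankSeq, labelSeq, List.map_map]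
  rfl

lemma caseA (hacyc : IsAcyclic adj) {u v : V} (hvu : reach adj v u)
    (hfin : ∀ w ∈ L, r w ≠ ⊤) {i : ℕ} (hEv : kOf adj L r v = i)
    (hpre : ∀ j, j < i → labVertex adj L r v j = labVertex adj L r u j) :
    rankSeq adj L r u = rankSeq adj L r v ∨
      List.Lex (· < ·) (rankSeq adj L r u) (rankSeq adj L r v) := by
  have hprefix : (List.range i).map (fun j => r (labVertex adj L r u j)) =
      (List.range i).map (fun j => r (labVertex adj L r v j)) :=
    List.map_congr_left fun j hj => congrArg r (hpre j (List.mem_range.1 hj)).symm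
  have hiu : i ≤ kOf adj L r u := by
    cases i with
    | zero => exact Nat.zero_le _
    | succ n =>
      have hnv : (Aset adj L r v n).Nonempty := (Aset_nonempty_iff hacyc v n).2 (by omega)
      have hsub := Aset_subset_of_reach hvu n fun j hj => hpre j (by omega)
      have hnu : (Aset adj L r u n).Nonempty := ⟨hnv.choose, hsub hnv.choose_spec⟩
      exact (Aset_nonempty_iff hacyc u n).1 hnu
  rcases Nat.lt_or_ge i (kOf adj L r u) with hlt | hge
  · right
    obtain ⟨t, ht⟩ := map_range_split (fun j => r (labVertex adj L r u j)) hlt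
    rw [rankSeq_eq u, rankSeq_eq v, ht, hEv, hprefix, List.append_assoc]
    apply List.Lex.append_left
    have hmem : labVertex adj L r u i ∈ L :=
      Aset_subset_L u i (argminR_mem ((Aset_nonempty_iff hacyc u i).2 hlt))
    have htop : r (labVertex adj L r u i) < ⊤ := lt_top_iff_ne_top.2 (hfin _ hmem)
    rw [List.cons_append]
    exact List.Lex.rel htop
  · left
    have hEu : kOf adj L r u = i := le_antisymm hge hiu
    rw [rankSeq_eq u, rankSeq_eq v, hEu, hEv, hprefix]

lemma rank_aux (hacyc : IsAcyclic adj) {u v : V} (hvu : reach adj v u)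
    (hfin : ∀ w ∈ L, r w ≠ ⊤) (hinj : Set.InjOn r L) :
    ∀ fuel i, kOf adj L r v ≤ i + fuel → i ≤ kOf adj L r v →
      (∀ j, j < i → labVertex adj L r v j = labVertex adj L r u j) →
      rankSeq adj L r u = rankSeq adj L r v ∨
        List.Lex (· < ·) (rankSeq adj L r u) (rankSeq adj L r v) := by
  intro fuel
  induction fuel with
  | zero =>
    intro i hk hle hpre
    exact caseA hacyc hvu hfin (le_antisymm hk hle) hpre
  | succ fuel ih =>
    intro i hk hle hpre
    by_cases hiv : i < kOf adj L r v
    · have h0v : (Aset adj L r v i).Nonempty := (Aset_nonempty_iff hacyc v i).2 hiv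
      have hsub := Aset_subset_of_reach hvu i hpre
      have h0u : (Aset adj L r u i).Nonempty := ⟨h0v.choose, hsub h0v.choose_spec⟩
      have hiu : i < kOf adj L r u := (Aset_nonempty_iff hacyc u i).1 h0u
      have hm : r (labVertex adj L r u i) ≤ r (labVertex adj L r v i) :=
        argminR_min h0u (hsub (argminR_mem h0v))
      rcases lt_or_eq_of_le hm with hlt | heq
      · right
        obtain ⟨tu, htu⟩ := map_range_split (fun j => r (labVertex adj L r u j)) hiu
        obtain ⟨tv, htv⟩ := map_range_split (fun j => r (labVertex adj L r v j)) hiv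
        have hprefix : (List.range i).map (fun j => r (labVertex adj L r u j)) =
            (List.range i).map (fun j => r (labVertex adj L r v j)) :=
          List.map_congr_left fun j hj => congrArg r (hpre j (List.mem_range.1 hj)).symm
        rw [rankSeq_eq u, rankSeq_eq v, htu, htv, hprefix, List.append_assoc,
          List.append_assoc]
        refine List.Lex.append_left _ ?_ _
        rw [List.cons_append, List.cons_append]
        exact List.Lex.rel hlt
      · have hlabeq : labVertex adj L r v i = labVertex adj L r u i := by
          have hvL : labVertex adj L r v i ∈ L := Aset_subset_L v i (argminR_mem h0v)
          have huL : labVertex adj L r u i ∈ L := Aset_subset_L u i (argminR_mem h0u)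
          exact hinj hvL huL heq.symm
        refine ih (i+1) (by omega) hiv ?_
        intro j hj
        rcases Nat.lt_or_ge j i with h' | h'
        · exact hpre j h'
        · have : j = i := by omega
          subst this
          exact hlabeq
    · exact caseA hacyc hvu hfin (le_antisymm (not_lt.1 hiv) hle) hpre

end AuxLemmas

/-- Theorem 1 of the paper: if `ℓ(u) ≺ ℓ(v)` then there is no
directed path from `v` to `u`. -/
theorem no_path_of_label_lt [Fintype V] [Nonempty V]
    (adj : V → V → Prop) (hacyc : IsAcyclic adj)
    (L : Finset V) (r : V → ℕ∞)
    (hfin : ∀ w ∈ L, r w ≠ ⊤) (hpos : ∀ w ∈ L, 0 < r w)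
    (hinf : ∀ w ∉ L, r w = ⊤) (hinj : Set.InjOn r L)
    (u v : V) (h : labLt adj L r u v) :
    ¬ reach adj v u := by
  intro hvu
  have h' : List.Lex (· < ·) (rankSeq adj L r v) (rankSeq adj L r u) := h
  rcases rank_aux hacyc hvu hfin hinj (kOf adj L r v) 0 (by omega) (Nat.zero_le _)
      (fun j hj => absurd hj (Nat.not_lt_zero j)) with heq | hlex
  · rw [heq] at h'
    exact (List.Lex.asymm (r := ((· < ·) : ℕ∞ → ℕ∞ → Prop))).asymm _ _ h' h'
  · exact (List.Lex.asymm (r := ((· < ·) : ℕ∞ → ℕ∞ → Prop))).asymm _ _ hlex h'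
end
end

section
/- For c ≥ e and λ ≥ 3, if k = ⌈c·ln λ⌉ then (ln λ)^{k−1}/(λ·k!) ≤ λ^{−1−c(ln c − 1)}. -/
open Real

lemma pow_le_exp_mul_factorial (k : ℕ) : (k:ℝ) ^ k ≤ Real.exp k * k.factorial := by
  have h : ((k:ℝ)) ^ k / k.factorial ≤ Real.exp k := by
    calc (k:ℝ) ^ k / k.factorial
        ≤ ∑ i ∈ Finset.range (k+1), (k:ℝ) ^ i / i.factorial := by
          refine Finset.single_le_sum (f := fun i => (k:ℝ) ^ i / i.factorial) ?_ ?_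
          · intro i _; positivity
          · exact Finset.self_mem_range_succ k
      _ ≤ Real.exp k := Real.sum_le_exp_of_nonneg (by positivity) _
  have hf : (0:ℝ) < k.factorial := by exact_mod_cast k.factorial_pos
  calc (k:ℝ) ^ k = (k:ℝ) ^ k / k.factorial * k.factorial := by field_simp
    _ ≤ Real.exp k * k.factorial := mul_le_mul_of_nonneg_right h hf.le

/-- for `c ≥ e` and `λ ≥ 3`, with `k = ⌈c·ln λ⌉`,
`(ln λ)^(k−1) / (λ·k!) ≤ λ^(−1−c(ln c − 1))`. -/
theorem label_tail_arithmetic (c lam : ℝ) (hc : Real.exp 1 ≤ c) (hlam : 3 ≤ lam) :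
    (Real.log lam) ^ (⌈c * Real.log lam⌉₊ - 1) /
        (lam * (Nat.factorial ⌈c * Real.log lam⌉₊ : ℝ)) ≤
      lam ^ (-1 - c * (Real.log c - 1)) := by
  have he : (0:ℝ) < Real.exp 1 := Real.exp_pos 1
  have hc0 : 0 < c := lt_of_lt_of_le he hc
  have hlam0 : (0:ℝ) < lam := by linarith
  set L := Real.log lam with hLdef
  have hL1 : 1 < L := by
    have h3 : Real.exp 1 < 3 := by
      have := Real.exp_one_lt_d9; linarith
    calc (1:ℝ) = Real.log (Real.exp 1) := (Real.log_exp 1).symm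
      _ < Real.log lam := Real.log_lt_log he (lt_of_lt_of_le h3 hlam)
  have hL0 : 0 < L := by linarith
  set k := ⌈c * L⌉₊ with hkdef
  have hcL : c * L ≤ (k:ℝ) := Nat.le_ceil _
  have hcL0 : 0 < c * L := mul_pos hc0 hL0
  have hk1 : 1 ≤ k := Nat.one_le_ceil_iff.mpr hcL0
  have hk0 : (0:ℝ) < (k:ℝ) := by exact_mod_cast Nat.lt_of_lt_of_le Nat.zero_lt_one hk1
  have hf0 : (0:ℝ) < (k.factorial : ℝ) := by exact_mod_cast k.factorial_pos
  have hLpowk : L ^ (k - 1) * L = L ^ k := by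
    rw [← pow_succ]
    congr 1
    omega
  have hec1 : Real.exp 1 / c ≤ 1 := (div_le_one hc0).mpr hc
  have hec0 : 0 < Real.exp 1 / c := div_pos he hc0
  have hexpk : Real.exp 1 ^ k = Real.exp (k : ℝ) := Real.exp_one_pow k
  -- Key numerical inequality: L^k ≤ (e/c)^k * k!
  have hmain : L ^ k ≤ (Real.exp 1 / c) ^ k * (k.factorial : ℝ) := by
    have key : (k:ℝ) ^ k ≤ Real.exp 1 ^ k * k.factorial := by
      rw [hexpk]; exact pow_le_exp_mul_factorial k
    have h2 : Real.exp 1 * L ≤ (Real.exp 1 / c) * k := by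
      rw [div_mul_eq_mul_div, le_div_iff₀ hc0]
      calc Real.exp 1 * L * c = Real.exp 1 * (c * L) := by ring
        _ ≤ Real.exp 1 * k := mul_le_mul_of_nonneg_left hcL he.le
    have h3 : Real.exp 1 ^ k * L ^ k ≤ (Real.exp 1 / c) ^ k * (k:ℝ) ^ k := by
      calc Real.exp 1 ^ k * L ^ k = (Real.exp 1 * L) ^ k := (mul_pow _ _ _).symm
        _ ≤ ((Real.exp 1 / c) * k) ^ k := pow_le_pow_left₀ (by positivity) h2 k
        _ = (Real.exp 1 / c) ^ k * (k:ℝ) ^ k := mul_pow _ _ _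
    have h4 : Real.exp 1 ^ k * L ^ k ≤
        Real.exp 1 ^ k * ((Real.exp 1 / c) ^ k * (k.factorial : ℝ)) := by
      calc Real.exp 1 ^ k * L ^ k ≤ (Real.exp 1 / c) ^ k * (k:ℝ) ^ k := h3
        _ ≤ (Real.exp 1 / c) ^ k * (Real.exp 1 ^ k * k.factorial) :=
            mul_le_mul_of_nonneg_left key (by positivity)
        _ = Real.exp 1 ^ k * ((Real.exp 1 / c) ^ k * (k.factorial : ℝ)) := by ring
    exact le_of_mul_le_mul_left h4 (by positivity)
  -- Step 1: LHS ≤ (e/c)^k / (lam * L)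
  have step1 : L ^ (k - 1) / (lam * (k.factorial : ℝ)) ≤
      (Real.exp 1 / c) ^ k / (lam * L) := by
    rw [div_le_div_iff₀ (by positivity) (by positivity)]
    calc L ^ (k - 1) * (lam * L) = lam * (L ^ (k - 1) * L) := by ring
      _ = lam * L ^ k := by rw [hLpowk]
      _ ≤ lam * ((Real.exp 1 / c) ^ k * (k.factorial : ℝ)) :=
          mul_le_mul_of_nonneg_left hmain hlam0.le
      _ = (Real.exp 1 / c) ^ k * (lam * (k.factorial : ℝ)) := by ring
  -- Step 2: (e/c)^k / (lam * L) ≤ (e/c)^(c*L) / lam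
  have step2 : (Real.exp 1 / c) ^ k / (lam * L) ≤
      (Real.exp 1 / c) ^ (c * L) / lam := by
    refine div_le_div₀ (by positivity) ?_ hlam0 ?_
    · calc (Real.exp 1 / c) ^ k = (Real.exp 1 / c) ^ ((k : ℕ) : ℝ) :=
          (Real.rpow_natCast _ k).symm
        _ ≤ (Real.exp 1 / c) ^ (c * L) :=
          Real.rpow_le_rpow_of_exponent_ge hec0 hec1 hcL
    · nlinarith
  -- Final identity
  have hfin : (Real.exp 1 / c) ^ (c * L) / lam = lam ^ (-1 - c * (Real.log c - 1)) := by
    have hlam_exp : lam = Real.exp L := (Real.exp_log hlam0).symm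
    rw [Real.rpow_def_of_pos hec0, Real.log_div he.ne' hc0.ne', Real.log_exp,
      Real.rpow_def_of_pos hlam0, ← hLdef]
    rw [hlam_exp, ← Real.exp_sub]
    congr 1
    ring
  calc L ^ (k - 1) / (lam * (k.factorial : ℝ)) ≤ (Real.exp 1 / c) ^ k / (lam * L) := step1
    _ ≤ (Real.exp 1 / c) ^ (c * L) / lam := step2
    _ = lam ^ (-1 - c * (Real.log c - 1)) := hfin
end
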